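/- Let N ≥ 1 and R > 0, and let M : ℂ → Matrix (Fin N) (Fin N) ℂ be such that each entry ξ ↦ M(ξ)_{ij} is analytic on the open disc {ξ : |ξ| < R}, the (1,1) entry satisfies M(ξ)_{11} = 1 for all |ξ| < R, and for every index pair (i,j) ≠ (1,1) there is a constant c_{ij} ≥ 0 with |M(ξ)_{ij}| ≤ c_{ij}·|ξ| for all |ξ| < R. Then there exist R' with 0 < R' ≤ R, a constant C ≥ 0, and functions μ : ℂ → ℂ and w : ℂ → (Fin N → ℂ), analytic on {|ξ| < R'}, such that: (i) μ(0) = 1 and the derivative of μ at 0 equals 0 (so μ(ξ) = 1 + O(ξ²)); (ii) w(0) is the first standard basis vector e₁; (iii) M(ξ)·w(ξ) = μ(ξ)·w(ξ) for all |ξ| < R'; (iv) for each |ξ| < R', μ(ξ) is a root of multiplicity one of the characteristic polynomial of M(ξ); and (v) every eigenvalue λ of M(ξ) with λ ≠ μ(ξ) satisfies |λ| ≤ C·|ξ|. -/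

import Mathlib

open Polynomial Matrix Metric Finset Filter


lemma charpoly_eval' {n : Type*} [Fintype n] [DecidableEq n] (M : Matrix n n ℂ) (t : ℂ) :
    M.charpoly.eval t = (t • (1 : Matrix n n ℂ) - M).det := by
  rw [Matrix.charpoly, _root_.eval_det, matPolyEquiv_charmatrix]
  simp [smul_one_eq_diagonal]

lemma isRoot_charpoly_iff' {n : Type*} [Fintype n] [DecidableEq n] (M : Matrix n n ℂ) (t : ℂ) :
    M.charpoly.IsRoot t ↔ ∃ v : n → ℂ, v ≠ 0 ∧ M.mulVec v = t • v := by
  rw [Polynomial.IsRoot, charpoly_eval', ← Matrix.exists_mulVec_eq_zero_iff]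
  constructor
  · rintro ⟨v, hv, h⟩
    refine ⟨v, hv, ?_⟩
    have := h
    rw [Matrix.sub_mulVec, Matrix.smul_mulVec, Matrix.one_mulVec, sub_eq_zero] at this
    exact this.symm
  · rintro ⟨v, hv, h⟩
    refine ⟨v, hv, ?_⟩
    rw [Matrix.sub_mulVec, Matrix.smul_mulVec, Matrix.one_mulVec, sub_eq_zero, h]

lemma gershgorin_of_isRoot {n : Type*} [Fintype n] [DecidableEq n] {M : Matrix n n ℂ} {t : ℂ}
    (h : M.charpoly.IsRoot t) :
    ∃ k, ‖t - M k k‖ ≤ ∑ j ∈ Finset.univ.erase k, ‖M k j‖ := by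
  obtain ⟨v, hv, hMv⟩ := (isRoot_charpoly_iff' M t).mp h
  have heig : Module.End.HasEigenvalue (Matrix.toLin' M) t := by
    apply Module.End.hasEigenvalue_of_hasEigenvector (x := v)
    refine ⟨Module.End.mem_eigenspace_iff.mpr ?_, hv⟩
    rw [Matrix.toLin'_apply, hMv]
  obtain ⟨k, hk⟩ := eigenvalue_mem_ball heig
  exact ⟨k, by simpa [Metric.mem_closedBall, dist_eq_norm] using hk⟩


noncomputable def pstep {N : ℕ} (M : ℂ → Matrix (Fin N) (Fin N) ℂ) (i0 : Fin N)
    (ξ : ℂ) (v : Fin N → ℂ) : Fin N → ℂ :=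
  fun i => if i = i0 then 1 else (∑ j, M ξ i j * v j) / (∑ j, M ξ i0 j * v j)

noncomputable def wseq {N : ℕ} (M : ℂ → Matrix (Fin N) (Fin N) ℂ) (i0 : Fin N) :
    ℕ → ℂ → Fin N → ℂ
  | 0, _ => Pi.single i0 1
  | n + 1, ξ => pstep M i0 ξ (wseq M i0 n ξ)

lemma pstep_i0 {N : ℕ} (M : ℂ → Matrix (Fin N) (Fin N) ℂ) (i0 : Fin N) (ξ : ℂ)
    (v : Fin N → ℂ) : pstep M i0 ξ v i0 = 1 := by simp [pstep]

lemma pstep_ne {N : ℕ} (M : ℂ → Matrix (Fin N) (Fin N) ℂ) {i0 i : Fin N} (h : i ≠ i0) (ξ : ℂ)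
    (v : Fin N → ℂ) :
    pstep M i0 ξ v i = (∑ j, M ξ i j * v j) / (∑ j, M ξ i0 j * v j) := by simp [pstep, h]

set_option maxHeartbeats 2000000 in
/-- **Perturbation lemma for a nearly rank-one analytic matrix family.**
If `M(ξ)` is an `N × N` matrix family, analytic on the disc `|ξ| < R`, with
`M(ξ)₁₁ = 1` and all other entries `O(ξ)`, then on some smaller disc `|ξ| < R'`
there are analytic `μ` and `w` with `μ(0) = 1`, `μ'(0) = 0`, `w(0) = e₁`,
`M(ξ) w(ξ) = μ(ξ) w(ξ)`, `μ(ξ)` a simple root of the characteristic polynomial,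
and all other eigenvalues bounded by `C |ξ|`. -/
theorem perturbation_lemma (N : ℕ) (hN : 1 ≤ N) (R : ℝ) (hR : 0 < R)
    (M : ℂ → Matrix (Fin N) (Fin N) ℂ)
    (hanal : ∀ i j : Fin N, AnalyticOnNhd ℂ (fun ξ => M ξ i j) (Metric.ball 0 R))
    (h11 : ∀ ξ ∈ Metric.ball (0 : ℂ) R, M ξ ⟨0, hN⟩ ⟨0, hN⟩ = 1)
    (hbound : ∀ i j : Fin N, (i, j) ≠ ((⟨0, hN⟩ : Fin N), (⟨0, hN⟩ : Fin N)) →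
      ∃ c : ℝ, 0 ≤ c ∧ ∀ ξ ∈ Metric.ball (0 : ℂ) R, ‖M ξ i j‖ ≤ c * ‖ξ‖) :
    ∃ R' C : ℝ, 0 < R' ∧ R' ≤ R ∧ 0 ≤ C ∧
      ∃ (μ : ℂ → ℂ) (w : ℂ → Fin N → ℂ),
        AnalyticOnNhd ℂ μ (Metric.ball 0 R') ∧
        (∀ i : Fin N, AnalyticOnNhd ℂ (fun ξ => w ξ i) (Metric.ball 0 R')) ∧
        μ 0 = 1 ∧
        deriv μ 0 = 0 ∧
        w 0 = Pi.single (⟨0, hN⟩ : Fin N) 1 ∧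
        (∀ ξ ∈ Metric.ball (0 : ℂ) R', (M ξ).mulVec (w ξ) = μ ξ • w ξ) ∧
        (∀ ξ ∈ Metric.ball (0 : ℂ) R',
          ((M ξ).charpoly).rootMultiplicity (μ ξ) = 1) ∧
        (∀ ξ ∈ Metric.ball (0 : ℂ) R', ∀ lam : ℂ,
          ((M ξ).charpoly).IsRoot lam → lam ≠ μ ξ → ‖lam‖ ≤ C * ‖ξ‖) := by

  classical
  set i0 : Fin N := ⟨0, hN⟩ with hi0
  -- a single constant bounding all non-(i0,i0) entries
  obtain ⟨K, hK1, hK⟩ : ∃ K : ℝ, 1 ≤ K ∧ ∀ i j : Fin N, (i, j) ≠ (i0, i0) →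
      ∀ ξ ∈ Metric.ball (0:ℂ) R, ‖M ξ i j‖ ≤ K * ‖ξ‖ := by
    choose c hc0 hc using hbound
    have hnn : ∀ i j : Fin N, (0:ℝ) ≤ (if h : (i, j) ≠ (i0, i0) then c i j h else 0) := by
      intro i j; split
      · exact hc0 _ _ _
      · exact le_refl 0
    refine ⟨1 + ∑ i : Fin N, ∑ j : Fin N, (if h : (i, j) ≠ (i0, i0) then c i j h else 0), ?_, ?_⟩
    · have h1 : (0:ℝ) ≤ ∑ i : Fin N, ∑ j : Fin N,
          (if h : (i, j) ≠ (i0, i0) then c i j h else 0) :=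
        Finset.sum_nonneg fun i _ => Finset.sum_nonneg fun j _ => hnn i j
      linarith
    · intro i j hij ξ hξ
      refine le_trans (hc i j hij ξ hξ) (mul_le_mul_of_nonneg_right ?_ (norm_nonneg ξ))
      have h2 : c i j hij ≤ ∑ j' : Fin N, (if h : (i, j') ≠ (i0, i0) then c i j' h else 0) := by
        have h3 := Finset.single_le_sum
          (f := fun j' => if h : (i, j') ≠ (i0, i0) then c i j' h else 0)
          (fun j' _ => hnn i j') (Finset.mem_univ j)
        rwa [dif_pos hij] at h3
      have h4 : (∑ j' : Fin N, (if h : (i, j') ≠ (i0, i0) then c i j' h else 0)) ≤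
          ∑ i' : Fin N, ∑ j' : Fin N, (if h : (i', j') ≠ (i0, i0) then c i' j' h else 0) :=
        Finset.single_le_sum
          (f := fun i' => ∑ j' : Fin N, (if h : (i', j') ≠ (i0, i0) then c i' j' h else 0))
          (fun i' _ => Finset.sum_nonneg fun j' _ => hnn i' j') (Finset.mem_univ i)
      linarith
  have hNpos : (0:ℝ) < N := by exact_mod_cast hN
  set K2 : ℝ := 64 * (N:ℝ)^2 * K^2 with hK2def
  have hK2 : 0 < K2 := by positivity
  set R' : ℝ := min R (1 / K2) with hR'def
  have hR'pos : 0 < R' := lt_min hR (by positivity)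
  have hR'R : R' ≤ R := min_le_left _ _
  have hball : Metric.ball (0:ℂ) R' ⊆ Metric.ball 0 R := Metric.ball_subset_ball hR'R
  -- smallness of entries on the small ball
  have hsmall : ∀ ξ ∈ Metric.ball (0:ℂ) R', (N:ℝ)^2 * (K * ‖ξ‖) ≤ 1/64 := by
    intro ξ hξ
    have h1 : ‖ξ‖ < 1 / K2 := by
      have := mem_ball_zero_iff.mp hξ
      exact lt_of_lt_of_le this (min_le_right _ _)
    have hξ0 : (0:ℝ) ≤ ‖ξ‖ := norm_nonneg _
    rw [hK2def] at h1
    rw [lt_div_iff₀ (by positivity)] at h1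
    nlinarith [sq_nonneg ((N:ℝ)*K), norm_nonneg ξ]
  have hNe : ∀ ξ ∈ Metric.ball (0:ℂ) R', (N:ℝ) * (K * ‖ξ‖) ≤ 1/64 := by
    intro ξ hξ
    have := hsmall ξ hξ
    have h1 : (N:ℝ) * (K * ‖ξ‖) ≤ (N:ℝ)^2 * (K * ‖ξ‖) := by
      have h2 : (1:ℝ) ≤ N := by exact_mod_cast hN
      have h3 : (N:ℝ) ≤ (N:ℝ)^2 := by nlinarith
      have h4 : (0:ℝ) ≤ K * ‖ξ‖ := by positivity
      exact mul_le_mul_of_nonneg_right h3 h4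
    linarith
  have he0 : ∀ ξ : ℂ, (0:ℝ) ≤ K * ‖ξ‖ := fun ξ => by positivity
  -- entry bounds
  have hent : ∀ ξ ∈ Metric.ball (0:ℂ) R', ∀ i j : Fin N, (i, j) ≠ (i0, i0) →
      ‖M ξ i j‖ ≤ K * ‖ξ‖ := fun ξ hξ i j hij => hK i j hij ξ (hball hξ)
  -- denominator estimate
  have hden : ∀ ξ ∈ Metric.ball (0:ℂ) R', ∀ v : Fin N → ℂ, v i0 = 1 → (∀ i, ‖v i‖ ≤ 1) →
      ‖(∑ j, M ξ i0 j * v j) - 1‖ ≤ (N:ℝ) * (K * ‖ξ‖) := by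
    intro ξ hξ v hv0 hv
    have hsum : (∑ j, M ξ i0 j * v j) = 1 + ∑ j ∈ Finset.univ.erase i0, M ξ i0 j * v j := by
      rw [← Finset.add_sum_erase _ _ (Finset.mem_univ i0), h11 ξ (hball hξ), hv0, one_mul]
    rw [hsum, add_sub_cancel_left]
    calc ‖∑ j ∈ Finset.univ.erase i0, M ξ i0 j * v j‖
        ≤ ∑ j ∈ Finset.univ.erase i0, ‖M ξ i0 j * v j‖ := norm_sum_le _ _
      _ ≤ ∑ _j ∈ Finset.univ.erase i0, (K * ‖ξ‖) := by
          apply Finset.sum_le_sum; intro j hj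
          rw [norm_mul]
          have hj' : j ≠ i0 := Finset.ne_of_mem_erase hj
          have h1 : ‖M ξ i0 j‖ ≤ K * ‖ξ‖ := hent ξ hξ i0 j (by simp [hj'])
          calc ‖M ξ i0 j‖ * ‖v j‖ ≤ (K * ‖ξ‖) * 1 :=
                mul_le_mul h1 (hv j) (norm_nonneg _) (he0 ξ)
            _ = K * ‖ξ‖ := mul_one _
      _ = ((Finset.univ.erase i0).card : ℝ) * (K * ‖ξ‖) := by
          rw [Finset.sum_const, nsmul_eq_mul]
      _ ≤ (N:ℝ) * (K * ‖ξ‖) := by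
          apply mul_le_mul_of_nonneg_right _ (he0 ξ)
          have h5 : (Finset.univ.erase i0).card ≤ N := by
            refine le_trans (Finset.card_erase_le) ?_
            simp
          exact_mod_cast h5
  have hdenlb : ∀ ξ ∈ Metric.ball (0:ℂ) R', ∀ v : Fin N → ℂ, v i0 = 1 → (∀ i, ‖v i‖ ≤ 1) →
      1/2 ≤ ‖∑ j, M ξ i0 j * v j‖ := by
    intro ξ hξ v hv0 hv
    have h1 := hden ξ hξ v hv0 hv
    have h2 := hNe ξ hξ
    have h4 : ‖(∑ j, M ξ i0 j * v j) - 1‖ ≤ 1/64 := le_trans h1 h2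
    have h5 := norm_sub_norm_le (1:ℂ) (∑ j, M ξ i0 j * v j)
    rw [norm_one, norm_sub_rev] at h5
    linarith
  have hdenne : ∀ ξ ∈ Metric.ball (0:ℂ) R', ∀ v : Fin N → ℂ, v i0 = 1 → (∀ i, ‖v i‖ ≤ 1) →
      (∑ j, M ξ i0 j * v j) ≠ 0 := by
    intro ξ hξ v hv0 hv h
    have := hdenlb ξ hξ v hv0 hv
    rw [h, norm_zero] at this; linarith
  -- numerator estimate
  have hnum : ∀ ξ ∈ Metric.ball (0:ℂ) R', ∀ i : Fin N, i ≠ i0 → ∀ v : Fin N → ℂ,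
      (∀ i, ‖v i‖ ≤ 1) → ‖∑ j, M ξ i j * v j‖ ≤ (N:ℝ) * (K * ‖ξ‖) := by
    intro ξ hξ i hi v hv
    calc ‖∑ j, M ξ i j * v j‖ ≤ ∑ j, ‖M ξ i j * v j‖ := norm_sum_le _ _
      _ ≤ ∑ _j : Fin N, (K * ‖ξ‖) := by
          apply Finset.sum_le_sum; intro j _
          rw [norm_mul]
          have h1 : ‖M ξ i j‖ ≤ K * ‖ξ‖ := hent ξ hξ i j (by simp [hi])
          calc ‖M ξ i j‖ * ‖v j‖ ≤ (K * ‖ξ‖) * 1 :=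
                mul_le_mul h1 (hv j) (norm_nonneg _) (he0 ξ)
            _ = K * ‖ξ‖ := mul_one _
      _ = (N:ℝ) * (K * ‖ξ‖) := by
          rw [Finset.sum_const, nsmul_eq_mul, Finset.card_univ, Fintype.card_fin]
  -- invariant
  have hinv : ∀ ξ ∈ Metric.ball (0:ℂ) R', ∀ n : ℕ,
      wseq M i0 n ξ i0 = 1 ∧ ∀ i, ‖wseq M i0 n ξ i‖ ≤ 1 := by
    intro ξ hξ n
    induction n with
    | zero =>
      constructor
      · exact Pi.single_eq_same i0 1
      · intro i
        by_cases hi : i = i0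
        · subst hi; rw [show wseq M i0 0 ξ i0 = 1 from Pi.single_eq_same i0 1]; simp
        · rw [show wseq M i0 0 ξ i = 0 from Pi.single_eq_of_ne hi 1]; simp
    | succ n ih =>
      obtain ⟨ih0, ih1⟩ := ih
      constructor
      · exact pstep_i0 M i0 ξ _
      · intro i
        by_cases hi : i = i0
        · subst hi
          rw [show wseq M i0 (n+1) ξ i0 = 1 from pstep_i0 M i0 ξ _]; simp
        · rw [show wseq M i0 (n+1) ξ i = _ from pstep_ne M hi ξ _]
          rw [norm_div]
          have h1 := hnum ξ hξ i hi _ ih1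
          have h2 := hdenlb ξ hξ _ ih0 ih1
          have h3 := hNe ξ hξ
          rw [div_le_one (by linarith)]
          linarith
  -- contraction
  have hcontr : ∀ ξ ∈ Metric.ball (0:ℂ) R', ∀ v v' : Fin N → ℂ,
      v i0 = 1 → (∀ i, ‖v i‖ ≤ 1) → v' i0 = 1 → (∀ i, ‖v' i‖ ≤ 1) →
      ∀ d : ℝ, 0 ≤ d → (∀ i, ‖v i - v' i‖ ≤ d) →
      ∀ i, ‖pstep M i0 ξ v i - pstep M i0 ξ v' i‖ ≤ (1/2) * d := by
    intro ξ hξ v v' hv0 hv hv'0 hv' d hd hvv' i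
    by_cases hi : i = i0
    · subst hi; rw [pstep_i0, pstep_i0, sub_self, norm_zero]; positivity
    · rw [pstep_ne M hi, pstep_ne M hi]
      set A := ∑ j, M ξ i j * v j with hA
      set A' := ∑ j, M ξ i j * v' j with hA'
      set D := ∑ j, M ξ i0 j * v j with hD
      set D' := ∑ j, M ξ i0 j * v' j with hD'
      have hDlb : 1/2 ≤ ‖D‖ := hdenlb ξ hξ v hv0 hv
      have hD'lb : 1/2 ≤ ‖D'‖ := hdenlb ξ hξ v' hv'0 hv'
      have hDne : D ≠ 0 := hdenne ξ hξ v hv0 hv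
      have hD'ne : D' ≠ 0 := hdenne ξ hξ v' hv'0 hv'
      have hNe' := hNe ξ hξ
      have he0' : (0:ℝ) ≤ (N:ℝ) * (K * ‖ξ‖) := by positivity
      have hD'ub : ‖D'‖ ≤ 2 := by
        have h1 := hden ξ hξ v' hv'0 hv'
        have h3 := norm_sub_norm_le D' 1
        rw [norm_one] at h3
        linarith
      have hA'ub : ‖A'‖ ≤ (N:ℝ) * (K * ‖ξ‖) := hnum ξ hξ i hi v' hv'
      have hAA' : ‖A - A'‖ ≤ (N:ℝ) * (K * ‖ξ‖) * d := by
        have h1 : A - A' = ∑ j, M ξ i j * (v j - v' j) := by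
          rw [hA, hA', ← Finset.sum_sub_distrib]
          congr 1; funext j; ring
        rw [h1]
        calc ‖∑ j, M ξ i j * (v j - v' j)‖ ≤ ∑ j, ‖M ξ i j * (v j - v' j)‖ := norm_sum_le _ _
          _ ≤ ∑ _j : Fin N, ((K * ‖ξ‖) * d) := by
              apply Finset.sum_le_sum; intro j _
              rw [norm_mul]
              exact mul_le_mul (hent ξ hξ i j (by simp [hi])) (hvv' j) (norm_nonneg _) (he0 ξ)
          _ = (N:ℝ) * ((K * ‖ξ‖) * d) := by
              rw [Finset.sum_const, nsmul_eq_mul, Finset.card_univ, Fintype.card_fin]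
          _ = (N:ℝ) * (K * ‖ξ‖) * d := by ring
      have hDD' : ‖D' - D‖ ≤ (N:ℝ) * (K * ‖ξ‖) * d := by
        have h1 : D' - D = ∑ j, M ξ i0 j * (v' j - v j) := by
          rw [hD, hD', ← Finset.sum_sub_distrib]
          congr 1; funext j; ring
        rw [h1]
        calc ‖∑ j, M ξ i0 j * (v' j - v j)‖ ≤ ∑ j, ‖M ξ i0 j * (v' j - v j)‖ := norm_sum_le _ _
          _ ≤ ∑ _j : Fin N, ((K * ‖ξ‖) * d) := by
              apply Finset.sum_le_sum; intro j _
              by_cases hj : j = i0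
              · subst hj
                rw [hv0, hv'0, sub_self, mul_zero, norm_zero]
                positivity
              · rw [norm_mul]
                have h2 : ‖v' j - v j‖ ≤ d := by rw [norm_sub_rev]; exact hvv' j
                exact mul_le_mul (hent ξ hξ i0 j (by simp [hj])) h2 (norm_nonneg _) (he0 ξ)
          _ = (N:ℝ) * ((K * ‖ξ‖) * d) := by
              rw [Finset.sum_const, nsmul_eq_mul, Finset.card_univ, Fintype.card_fin]
          _ = (N:ℝ) * (K * ‖ξ‖) * d := by ring
      rw [div_sub_div A A' hDne hD'ne, norm_div, norm_mul]
      have hnum2 : ‖A * D' - D * A'‖ ≤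
          (N:ℝ)*(K*‖ξ‖)*d*2 + (N:ℝ)*(K*‖ξ‖) * ((N:ℝ)*(K*‖ξ‖)*d) := by
        have h1 : A * D' - D * A' = (A - A') * D' + A' * (D' - D) := by ring
        rw [h1]
        calc ‖(A - A') * D' + A' * (D' - D)‖ ≤ ‖(A - A') * D'‖ + ‖A' * (D' - D)‖ :=
              norm_add_le _ _
          _ ≤ (N:ℝ)*(K*‖ξ‖)*d*2 + (N:ℝ)*(K*‖ξ‖) * ((N:ℝ)*(K*‖ξ‖)*d) := by
              rw [norm_mul, norm_mul]
              have t1 : ‖A - A'‖ * ‖D'‖ ≤ ((N:ℝ)*(K*‖ξ‖)*d) * 2 :=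
                mul_le_mul hAA' hD'ub (norm_nonneg _) (by positivity)
              have t2 : ‖A'‖ * ‖D' - D‖ ≤ ((N:ℝ)*(K*‖ξ‖)) * ((N:ℝ)*(K*‖ξ‖)*d) :=
                mul_le_mul hA'ub hDD' (norm_nonneg _) he0'
              linarith
      have hprod : (1:ℝ)/4 ≤ ‖D‖ * ‖D'‖ := by nlinarith
      calc ‖A * D' - D * A'‖ / (‖D‖ * ‖D'‖) ≤ ‖A * D' - D * A'‖ / (1/4) := by
            apply div_le_div_of_nonneg_left (norm_nonneg _) (by norm_num) hprod
        _ = 4 * ‖A * D' - D * A'‖ := by ring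
        _ ≤ (1/2) * d := by
            have hed : (N:ℝ)*(K*‖ξ‖) * d ≤ (1/64) * d := mul_le_mul_of_nonneg_right hNe' hd
            have hed2 : (N:ℝ)*(K*‖ξ‖) * ((N:ℝ)*(K*‖ξ‖)*d) ≤ (1/64) * ((N:ℝ)*(K*‖ξ‖)*d) :=
              mul_le_mul_of_nonneg_right hNe' (by positivity)
            nlinarith [mul_nonneg he0' hd]
  -- geometric decay of increments
  have hgeo : ∀ ξ ∈ Metric.ball (0:ℂ) R', ∀ n : ℕ, ∀ i,
      ‖wseq M i0 n ξ i - wseq M i0 (n+1) ξ i‖ ≤ (1/2)^n := by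
    intro ξ hξ n
    induction n with
    | zero =>
      intro i
      by_cases hi : i = i0
      · subst hi
        rw [show wseq M i0 0 ξ i0 = 1 from Pi.single_eq_same i0 1,
          show wseq M i0 1 ξ i0 = 1 from pstep_i0 M i0 ξ _, sub_self, norm_zero]
        norm_num
      · rw [show wseq M i0 0 ξ i = 0 from Pi.single_eq_of_ne hi 1, zero_sub, norm_neg]
        simpa using (hinv ξ hξ 1).2 i
    | succ n ih =>
      intro i
      have h1 := hcontr ξ hξ (wseq M i0 n ξ) (wseq M i0 (n+1) ξ)
        (hinv ξ hξ n).1 (hinv ξ hξ n).2 (hinv ξ hξ (n+1)).1 (hinv ξ hξ (n+1)).2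
        ((1/2)^n) (by positivity) ih i
      calc ‖wseq M i0 (n+1) ξ i - wseq M i0 (n+2) ξ i‖ ≤ (1/2) * (1/2)^n := h1
        _ = (1/2)^(n+1) := by ring
  -- the limit function
  set w : ℂ → Fin N → ℂ := fun ξ => limUnder atTop (fun n => wseq M i0 n ξ) with hwdef
  have htend : ∀ ξ ∈ Metric.ball (0:ℂ) R',
      Tendsto (fun n => wseq M i0 n ξ) atTop (nhds (w ξ)) := by
    intro ξ hξ
    have hc : CauchySeq (fun n => wseq M i0 n ξ) := by
      apply cauchySeq_of_le_geometric (1/2) 1 (by norm_num)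
      intro n
      rw [dist_pi_le_iff (by positivity)]
      intro i
      rw [dist_eq_norm]
      calc ‖wseq M i0 n ξ i - wseq M i0 (n+1) ξ i‖ ≤ (1/2)^n := hgeo ξ hξ n i
        _ = 1 * (1/2)^n := (one_mul _).symm
    exact hc.tendsto_limUnder
  have hdistw : ∀ ξ ∈ Metric.ball (0:ℂ) R', ∀ n : ℕ, ∀ i,
      ‖wseq M i0 n ξ i - w ξ i‖ ≤ (1/2)^n * 2 := by
    intro ξ hξ n i
    have h1 : dist (wseq M i0 n ξ) (w ξ) ≤ 1 * (1/2)^n / (1 - 1/2) := by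
      apply dist_le_of_le_geometric_of_tendsto (1/2) 1 (by norm_num) _ (htend ξ hξ) n
      intro m
      rw [dist_pi_le_iff (by positivity)]
      intro i'
      rw [dist_eq_norm]
      calc ‖wseq M i0 m ξ i' - wseq M i0 (m+1) ξ i'‖ ≤ (1/2)^m := hgeo ξ hξ m i'
        _ = 1 * (1/2)^m := (one_mul _).symm
    have h2 : dist (wseq M i0 n ξ i) (w ξ i) ≤ dist (wseq M i0 n ξ) (w ξ) :=
      dist_le_pi_dist _ _ i
    rw [dist_eq_norm] at h2
    have h3 : 1 * (1/2:ℝ)^n / (1 - 1/2) = (1/2)^n * 2 := by ring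
    linarith
  have htendi : ∀ ξ ∈ Metric.ball (0:ℂ) R', ∀ i,
      Tendsto (fun n => wseq M i0 n ξ i) atTop (nhds (w ξ i)) := by
    intro ξ hξ i
    exact (tendsto_pi_nhds.mp (htend ξ hξ)) i
  have hwi0 : ∀ ξ ∈ Metric.ball (0:ℂ) R', w ξ i0 = 1 := by
    intro ξ hξ
    have h1 := htendi ξ hξ i0
    have h2 : (fun n => wseq M i0 n ξ i0) = fun _ => (1:ℂ) := by
      funext n; exact (hinv ξ hξ n).1
    rw [h2] at h1
    exact (tendsto_nhds_unique tendsto_const_nhds h1).symm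
  have hwle : ∀ ξ ∈ Metric.ball (0:ℂ) R', ∀ i, ‖w ξ i‖ ≤ 1 := by
    intro ξ hξ i
    exact le_of_tendsto ((htendi ξ hξ i).norm) (Eventually.of_forall fun n => (hinv ξ hξ n).2 i)
  have hfix : ∀ ξ ∈ Metric.ball (0:ℂ) R', pstep M i0 ξ (w ξ) = w ξ := by
    intro ξ hξ
    funext i
    by_cases hi : i = i0
    · subst hi; rw [pstep_i0]; exact (hwi0 ξ hξ).symm
    · rw [pstep_ne M hi]
      have hnumt : Tendsto (fun n => ∑ j, M ξ i j * wseq M i0 n ξ j) atTop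
          (nhds (∑ j, M ξ i j * w ξ j)) := by
        apply tendsto_finset_sum
        intro j _
        exact (htendi ξ hξ j).const_mul _
      have hdent : Tendsto (fun n => ∑ j, M ξ i0 j * wseq M i0 n ξ j) atTop
          (nhds (∑ j, M ξ i0 j * w ξ j)) := by
        apply tendsto_finset_sum
        intro j _
        exact (htendi ξ hξ j).const_mul _
      have hdne : (∑ j, M ξ i0 j * w ξ j) ≠ 0 :=
        hdenne ξ hξ (w ξ) (hwi0 ξ hξ) (hwle ξ hξ)
      have h1 : Tendsto (fun n => wseq M i0 (n+1) ξ i) atTop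
          (nhds ((∑ j, M ξ i j * w ξ j) / (∑ j, M ξ i0 j * w ξ j))) := by
        have heq : (fun n => wseq M i0 (n+1) ξ i) =
            fun n => (∑ j, M ξ i j * wseq M i0 n ξ j) / (∑ j, M ξ i0 j * wseq M i0 n ξ j) := by
          funext n
          exact pstep_ne M hi ξ _
        rw [heq]
        exact hnumt.div hdent hdne
      have h2 : Tendsto (fun n => wseq M i0 (n+1) ξ i) atTop (nhds (w ξ i)) :=
        (htendi ξ hξ i).comp (tendsto_add_atTop_nat 1)
      exact tendsto_nhds_unique h1 h2
  set μ : ℂ → ℂ := fun ξ => ∑ j, M ξ i0 j * w ξ j with hμdef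
  have hμ1 : ∀ ξ ∈ Metric.ball (0:ℂ) R', ‖μ ξ - 1‖ ≤ (N:ℝ) * (K * ‖ξ‖) := by
    intro ξ hξ
    exact hden ξ hξ (w ξ) (hwi0 ξ hξ) (hwle ξ hξ)
  have hμne : ∀ ξ ∈ Metric.ball (0:ℂ) R', μ ξ ≠ 0 := by
    intro ξ hξ
    exact hdenne ξ hξ (w ξ) (hwi0 ξ hξ) (hwle ξ hξ)
  -- eigen equation
  have heig : ∀ ξ ∈ Metric.ball (0:ℂ) R', (M ξ).mulVec (w ξ) = μ ξ • w ξ := by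
    intro ξ hξ
    funext i
    have hmv : (M ξ).mulVec (w ξ) i = ∑ j, M ξ i j * w ξ j := by
      simp [Matrix.mulVec, dotProduct]
    by_cases hi : i = i0
    · subst hi
      rw [hmv, Pi.smul_apply, hwi0 ξ hξ, smul_eq_mul, mul_one]
    · have h1 : w ξ i = (∑ j, M ξ i j * w ξ j) / μ ξ := by
        conv_lhs => rw [← hfix ξ hξ]
        rw [pstep_ne M hi]
      rw [hmv, Pi.smul_apply, smul_eq_mul, h1, mul_div_cancel₀ _ (hμne ξ hξ)]
  -- values at 0
  have h0mem : (0:ℂ) ∈ Metric.ball (0:ℂ) R' := by simpa using hR'pos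
  have hM0 : ∀ i j : Fin N, (i, j) ≠ (i0, i0) → M 0 i j = 0 := by
    intro i j hij
    have := hent 0 h0mem i j hij
    exact norm_le_zero_iff.mp (by simpa using this)
  have hw0 : w 0 = Pi.single i0 1 := by
    have hseq0 : ∀ n, wseq M i0 n 0 = Pi.single i0 1 := by
      intro n
      induction n with
      | zero => rfl
      | succ n ih =>
        funext i
        by_cases hi : i = i0
        · subst hi
          rw [show wseq M i0 (n+1) 0 i0 = 1 from pstep_i0 M i0 0 _, Pi.single_eq_same]
        · rw [show wseq M i0 (n+1) 0 i = _ from pstep_ne M hi 0 _, ih]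
          have hz : ∑ j, M 0 i j * (Pi.single i0 1 : Fin N → ℂ) j = 0 := by
            rw [Finset.sum_eq_single i0 (fun j _ hj => by rw [Pi.single_eq_of_ne hj, mul_zero])
              (fun h => absurd (Finset.mem_univ i0) h)]
            rw [Pi.single_eq_same, hM0 i i0 (by simp [hi]), zero_mul]
          rw [hz, zero_div, Pi.single_eq_of_ne hi]
    have h1 := htend 0 h0mem
    simp only [hseq0] at h1
    exact tendsto_nhds_unique h1 tendsto_const_nhds
  have hwne0 : ∀ ξ ∈ Metric.ball (0:ℂ) R', w ξ ≠ 0 := by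
    intro ξ hξ h
    have h1 := hwi0 ξ hξ
    rw [h] at h1
    simp at h1
  have hμ0 : μ 0 = 1 := by
    have h1 : μ 0 = ∑ j, M 0 i0 j * w 0 j := rfl
    rw [h1, hw0]
    rw [Finset.sum_eq_single i0 (fun j _ hj => by rw [Pi.single_eq_of_ne hj, mul_zero])
        (fun h => absurd (Finset.mem_univ i0) h)]
    rw [Pi.single_eq_same, mul_one]
    exact h11 0 (hball h0mem)
  -- differentiability of the iterates
  have hMdiff : ∀ i j : Fin N, DifferentiableOn ℂ (fun ξ => M ξ i j) (Metric.ball 0 R') :=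
    fun i j => ((hanal i j).differentiableOn).mono hball
  have hdiffn : ∀ n : ℕ, ∀ i : Fin N,
      DifferentiableOn ℂ (fun ξ => wseq M i0 n ξ i) (Metric.ball 0 R') := by
    intro n
    induction n with
    | zero =>
      intro i
      exact differentiableOn_const _
    | succ n ih =>
      intro i
      by_cases hi : i = i0
      · subst hi
        have heq : (fun ξ => wseq M i0 (n+1) ξ i0) = fun _ => (1:ℂ) :=
          funext fun ξ => pstep_i0 M i0 ξ _
        rw [heq]
        exact differentiableOn_const _
      · have heq : (fun ξ => wseq M i0 (n+1) ξ i) =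
            fun ξ => (∑ j, M ξ i j * wseq M i0 n ξ j) / (∑ j, M ξ i0 j * wseq M i0 n ξ j) :=
          funext fun ξ => pstep_ne M hi ξ _
        rw [heq]
        apply DifferentiableOn.div
        · exact DifferentiableOn.fun_sum fun j _ => (hMdiff i j).mul (ih j)
        · exact DifferentiableOn.fun_sum fun j _ => (hMdiff i0 j).mul (ih j)
        · exact fun ξ hξ => hdenne ξ hξ _ (hinv ξ hξ n).1 (hinv ξ hξ n).2
  have hwdiff : ∀ i : Fin N, DifferentiableOn ℂ (fun ξ => w ξ i) (Metric.ball 0 R') := by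
    intro i
    have hT : TendstoUniformlyOn (fun n ξ => wseq M i0 n ξ i) (fun ξ => w ξ i) atTop
        (Metric.ball 0 R') := by
      rw [Metric.tendstoUniformlyOn_iff]
      intro ε hε
      have h2 : Tendsto (fun n : ℕ => (1/2:ℝ)^n * 2) atTop (nhds 0) := by
        simpa using (tendsto_pow_atTop_nhds_zero_of_lt_one (by norm_num : (0:ℝ) ≤ 1/2)
          (by norm_num : (1/2:ℝ) < 1)).mul_const (2:ℝ)
      filter_upwards [h2.eventually (gt_mem_nhds hε)] with n hn ξ hξ
      rw [dist_comm, dist_eq_norm]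
      exact lt_of_le_of_lt (hdistw ξ hξ n i) hn
    exact hT.tendstoLocallyUniformlyOn.differentiableOn
      (Eventually.of_forall fun n => hdiffn n i) isOpen_ball
  have hμdiff : DifferentiableOn ℂ μ (Metric.ball 0 R') := by
    exact DifferentiableOn.fun_sum fun j _ => (hMdiff i0 j).mul (hwdiff j)
  have hderiv : deriv μ 0 = 0 := by
    have hMd : ∀ j : Fin N, DifferentiableAt ℂ (fun ξ => M ξ i0 j) 0 :=
      fun j => ((hanal i0 j) 0 (hball h0mem)).differentiableAt
    have hwd : ∀ j : Fin N, DifferentiableAt ℂ (fun ξ => w ξ j) 0 :=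
      fun j => (hwdiff j).differentiableAt (isOpen_ball.mem_nhds h0mem)
    have hD : ∀ j : Fin N, HasDerivAt (fun ξ => M ξ i0 j * w ξ j)
        (deriv (fun ξ => M ξ i0 j) 0 * w 0 j + M 0 i0 j * deriv (fun ξ => w ξ j) 0) 0 :=
      fun j => (hMd j).hasDerivAt.mul (hwd j).hasDerivAt
    have hsum : HasDerivAt μ (∑ j : Fin N, (deriv (fun ξ => M ξ i0 j) 0 * w 0 j +
        M 0 i0 j * deriv (fun ξ => w ξ j) 0)) 0 := HasDerivAt.fun_sum (fun j _ => hD j)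
    rw [hsum.deriv]
    apply Finset.sum_eq_zero
    intro j _
    by_cases hj : j = i0
    · subst hj
      have hd1 : deriv (fun ξ => M ξ i0 i0) 0 = 0 := by
        have hev : (fun ξ => M ξ i0 i0) =ᶠ[nhds 0] fun _ => (1:ℂ) := by
          filter_upwards [isOpen_ball.mem_nhds (hball h0mem)] with ξ hξ using h11 ξ hξ
        rw [hev.deriv_eq, deriv_const]
      have hd2 : deriv (fun ξ => w ξ i0) 0 = 0 := by
        have hev : (fun ξ => w ξ i0) =ᶠ[nhds 0] fun _ => (1:ℂ) := by
          filter_upwards [isOpen_ball.mem_nhds h0mem] with ξ hξ using hwi0 ξ hξ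
        rw [hev.deriv_eq, deriv_const]
      rw [hd1, hd2, zero_mul, mul_zero, add_zero]
    · rw [hw0, Pi.single_eq_of_ne hj, hM0 i0 j (by simp [hj]), mul_zero, zero_mul, add_zero]
  -- spectral part
  have hkey : ∀ ξ ∈ Metric.ball (0:ℂ) R',
      ((M ξ).charpoly).rootMultiplicity (μ ξ) = 1 ∧
      (∀ lam : ℂ, ((M ξ).charpoly).IsRoot lam → lam ≠ μ ξ → ‖lam‖ ≤ ((N:ℝ) * K) * ‖ξ‖) := by
    intro ξ hξ
    have hNe' := hNe ξ hξ
    have hN2' := hsmall ξ hξ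
    have he0' : (0:ℝ) ≤ (N:ℝ) * (K * ‖ξ‖) := by positivity
    set p := (M ξ).charpoly with hp
    have hpne : p ≠ 0 := (M ξ).charpoly_monic.ne_zero
    have hμroot : p.IsRoot (μ ξ) := by
      rw [hp, isRoot_charpoly_iff']
      exact ⟨w ξ, hwne0 ξ hξ, heig ξ hξ⟩
    -- Gershgorin dichotomy
    have hdich : ∀ lam : ℂ, p.IsRoot lam →
        ‖lam‖ ≤ (N:ℝ) * (K * ‖ξ‖) ∨ ‖lam - 1‖ ≤ (N:ℝ) * (K * ‖ξ‖) := by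
      intro lam hlam
      obtain ⟨k, hk⟩ := gershgorin_of_isRoot hlam
      have hrad : ∑ j ∈ Finset.univ.erase k, ‖M ξ k j‖ ≤ ((N:ℝ) - 1) * (K * ‖ξ‖) := by
        calc ∑ j ∈ Finset.univ.erase k, ‖M ξ k j‖
            ≤ ∑ _j ∈ Finset.univ.erase k, (K * ‖ξ‖) := by
              apply Finset.sum_le_sum; intro j hj
              apply hent ξ hξ k j
              intro h
              rw [Prod.mk.injEq] at h
              exact (Finset.ne_of_mem_erase hj) (h.2.trans h.1.symm)
          _ = (((Finset.univ.erase k).card : ℝ)) * (K * ‖ξ‖) := by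
              rw [Finset.sum_const, nsmul_eq_mul]
          _ ≤ ((N:ℝ) - 1) * (K * ‖ξ‖) := by
              apply mul_le_mul_of_nonneg_right _ (he0 ξ)
              rw [Finset.card_erase_of_mem (Finset.mem_univ k), Finset.card_univ,
                Fintype.card_fin]
              rw [Nat.cast_sub hN, Nat.cast_one]
          _ = ((N:ℝ) - 1) * (K * ‖ξ‖) := rfl
      by_cases hk0 : k = i0
      · right
        subst hk0
        rw [h11 ξ (hball hξ)] at hk
        have h3 : (0:ℝ) ≤ K * ‖ξ‖ := he0 ξ
        linarith
      · left
        have h1 : ‖M ξ k k‖ ≤ K * ‖ξ‖ := hent ξ hξ k k (by simp [hk0])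
        have h2 : ‖lam‖ ≤ ‖lam - M ξ k k‖ + ‖M ξ k k‖ := by
          have := norm_add_le (lam - M ξ k k) (M ξ k k)
          rwa [sub_add_cancel] at this
        linarith
    set rts := p.roots with hrts
    have hcard : Multiset.card rts = N := by
      rw [hrts, (Polynomial.splits_iff_card_roots).mp (IsAlgClosed.splits p), hp,
        Matrix.charpoly_natDegree_eq_dim, Fintype.card_fin]
    have htr : ‖(M ξ).trace - 1‖ ≤ (N:ℝ) * (K * ‖ξ‖) := by
      have h1 : (M ξ).trace = 1 + ∑ i ∈ Finset.univ.erase i0, M ξ i i := by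
        rw [Matrix.trace, ← Finset.add_sum_erase _ _ (Finset.mem_univ i0)]
        rw [show (M ξ).diag i0 = M ξ i0 i0 from rfl, h11 ξ (hball hξ)]
        rfl
      rw [h1, add_sub_cancel_left]
      calc ‖∑ i ∈ Finset.univ.erase i0, M ξ i i‖
          ≤ ∑ i ∈ Finset.univ.erase i0, ‖M ξ i i‖ := norm_sum_le _ _
        _ ≤ ∑ _i ∈ Finset.univ.erase i0, (K * ‖ξ‖) := by
            apply Finset.sum_le_sum; intro i hi
            exact hent ξ hξ i i (by simp [Finset.ne_of_mem_erase hi])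
        _ = (((Finset.univ.erase i0).card : ℝ)) * (K * ‖ξ‖) := by
            rw [Finset.sum_const, nsmul_eq_mul]
        _ ≤ (N:ℝ) * (K * ‖ξ‖) := by
            apply mul_le_mul_of_nonneg_right _ (he0 ξ)
            have h5 : (Finset.univ.erase i0).card ≤ N := by
              refine le_trans (Finset.card_erase_le) ?_
              simp
            exact_mod_cast h5
    have hsumroots : (M ξ).trace = rts.sum := Matrix.trace_eq_sum_roots_charpoly (M ξ)
    set F := rts.filter (fun z => ‖z - 1‖ ≤ 1/4) with hF
    set G := rts.filter (fun z => ¬ (‖z - 1‖ ≤ 1/4)) with hG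
    have hmemF : ∀ z ∈ F, (3/4:ℝ) ≤ z.re := by
      intro z hz
      have h2 := (Multiset.mem_filter.mp hz).2
      have h3 : |z.re - 1| ≤ ‖z - 1‖ := by
        have h4 := Complex.abs_re_le_norm (z - 1)
        simpa [Complex.sub_re] using h4
      have h5 := abs_le.mp (le_trans h3 h2)
      linarith [h5.1]
    have hmemG : ∀ z ∈ G, -((N:ℝ)*(K*‖ξ‖)) ≤ z.re := by
      intro z hz
      obtain ⟨hz1, hz2⟩ := Multiset.mem_filter.mp hz
      have hroot : p.IsRoot z := Polynomial.isRoot_of_mem_roots hz1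
      rcases hdich z hroot with h | h
      · have h6 : |z.re| ≤ ‖z‖ := Complex.abs_re_le_norm z
        have h7 := abs_le.mp (le_trans h6 h)
        linarith [h7.1]
      · exact absurd (le_trans h (by linarith)) hz2
    have hsplit : F + G = rts := Multiset.filter_add_not _ _
    have hcardF : Multiset.card F ≤ 1 := by
      by_contra hge
      push_neg at hge
      have h2 : (2:ℕ) ≤ Multiset.card F := hge
      have hmsum : ∀ s : Multiset ℂ, s.sum.re = (s.map Complex.re).sum := by
        intro s
        induction s using Multiset.induction with
        | empty => simp
        | cons a s ih => simp [ih]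
      have hre : ((M ξ).trace).re = ((F.map Complex.re).sum + (G.map Complex.re).sum) := by
        rw [hsumroots, ← hsplit, Multiset.sum_add, Complex.add_re, hmsum, hmsum]
      have hsum1 : (2:ℝ) * (3/4) ≤ (F.map Complex.re).sum := by
        have h3 : Multiset.card (F.map Complex.re) • (3/4:ℝ) ≤ (F.map Complex.re).sum := by
          apply Multiset.card_nsmul_le_sum
          intro x hx
          obtain ⟨z, hz, rfl⟩ := Multiset.mem_map.mp hx
          exact hmemF z hz
        rw [Multiset.card_map, nsmul_eq_mul] at h3
        have h4 : (2:ℝ) ≤ (Multiset.card F : ℝ) := by exact_mod_cast h2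
        nlinarith
      have hsum2 : -(1/64 : ℝ) ≤ (G.map Complex.re).sum := by
        have h3 : Multiset.card (G.map Complex.re) • (-((N:ℝ)*(K*‖ξ‖))) ≤
            (G.map Complex.re).sum := by
          apply Multiset.card_nsmul_le_sum
          intro x hx
          obtain ⟨z, hz, rfl⟩ := Multiset.mem_map.mp hx
          exact hmemG z hz
        rw [Multiset.card_map, nsmul_eq_mul] at h3
        have hcardG : (Multiset.card G : ℝ) ≤ (N:ℝ) := by
          have h5 : Multiset.card G ≤ Multiset.card rts :=
            Multiset.card_le_card (Multiset.filter_le _ _)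
          rw [hcard] at h5
          exact_mod_cast h5
        have h6 : (Multiset.card G : ℝ) * ((N:ℝ)*(K*‖ξ‖)) ≤ (N:ℝ) * ((N:ℝ)*(K*‖ξ‖)) :=
          mul_le_mul_of_nonneg_right hcardG he0'
        have h7 : (N:ℝ) * ((N:ℝ)*(K*‖ξ‖)) ≤ 1/64 := by
          have : (N:ℝ) * ((N:ℝ)*(K*‖ξ‖)) = (N:ℝ)^2 * (K*‖ξ‖) := by ring
          rw [this]; exact hN2'
        nlinarith
      have htrre : ((M ξ).trace).re ≤ 1 + 1/64 := by
        have h8 : |((M ξ).trace - 1).re| ≤ ‖(M ξ).trace - 1‖ := Complex.abs_re_le_norm _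
        rw [Complex.sub_re, Complex.one_re] at h8
        have h9 := (abs_le.mp (le_trans h8 htr)).2
        linarith
      rw [hre] at htrre
      linarith
    -- root multiplicity of μ ξ is 1
    have hμF : μ ξ ∈ F := by
      rw [hF, Multiset.mem_filter]
      refine ⟨Polynomial.mem_roots'.mpr ⟨hpne, hμroot⟩, ?_⟩
      have h1 := hμ1 ξ hξ
      linarith
    constructor
    · have hcount : p.rootMultiplicity (μ ξ) = Multiset.count (μ ξ) rts :=
        (Polynomial.count_roots p).symm
      rw [hp] at hcount ⊢
      rw [hcount]
      have h1 : Multiset.count (μ ξ) rts = Multiset.count (μ ξ) F := by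
        rw [hF, Multiset.count_filter_of_pos]
        have h2 := hμ1 ξ hξ
        linarith
      have h2 : Multiset.count (μ ξ) F ≤ Multiset.card F := Multiset.count_le_card _ _
      have h3 : 1 ≤ Multiset.count (μ ξ) F := Multiset.one_le_count_iff_mem.mpr hμF
      omega
    · intro lam hlam hne
      by_cases hl : ‖lam - 1‖ ≤ 1/4
      · exfalso
        have hlamF : lam ∈ F := by
          rw [hF, Multiset.mem_filter]
          exact ⟨Polynomial.mem_roots'.mpr ⟨hpne, hlam⟩, hl⟩
        have h4 : lam ∈ F.erase (μ ξ) := (Multiset.mem_erase_of_ne hne).mpr hlamF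
        have h5 : 0 < Multiset.card (F.erase (μ ξ)) :=
          Multiset.card_pos_iff_exists_mem.mpr ⟨lam, h4⟩
        have h6 : Multiset.card (F.erase (μ ξ)) = Multiset.card F - 1 :=
          Multiset.card_erase_of_mem hμF
        omega
      · rcases hdich lam hlam with h | h
        · calc ‖lam‖ ≤ (N:ℝ) * (K * ‖ξ‖) := h
            _ = ((N:ℝ) * K) * ‖ξ‖ := by ring
        · exact absurd (le_trans h (by linarith)) hl
  refine ⟨R', (N:ℝ) * K, hR'pos, hR'R, by positivity, μ, w, ?_, ?_, hμ0, hderiv, hw0, heig,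
    fun ξ hξ => (hkey ξ hξ).1, fun ξ hξ lam h1 h2 => (hkey ξ hξ).2 lam h1 h2⟩
  · exact hμdiff.analyticOnNhd isOpen_ball
  · exact fun i => (hwdiff i).analyticOnNhd isOpen_ball
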